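/- Assume the kernel is bounded by 1, i.e. k(x,x) ≤ 1 for all x ∈ 𝒳. Then for every n ≥ 1 and δ ∈ (0,1), with probability at least 1 − δ over an i.i.d. sample X_1, …, X_n from P (the product measure P^{⊗n}), the empirical mean embedding μ̂_P := (1/n) Σ_{i=1}^n φ(X_i) satisfies ‖μ̂_P − μ_P‖_H ≤ 2 √( ∫ k(x,x) dP(x) / n ) + √( 2 log(1/δ) / n ). -/

import Mathlib

open Real MeasureTheory

lemma u_pos {p : ℝ} (hp0 : 0 ≤ p) (hp1 : p ≤ 1) (h : ℝ) : 0 < 1 - p + p * exp h := by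
  rcases eq_or_lt_of_le hp1 with rfl | hp1
  · simpa using exp_pos h
  · have : 0 < 1 - p := by linarith
    nlinarith [exp_pos h, mul_nonneg hp0 (exp_pos h).le]

lemma hoeffding_core {p : ℝ} (hp0 : 0 ≤ p) (hp1 : p ≤ 1) (h : ℝ) :
    (1 - p) * exp (-p * h) + p * exp ((1 - p) * h) ≤ exp (h ^ 2 / 8) := by
  set u : ℝ → ℝ := fun x => 1 - p + p * exp x with hu
  have hupos : ∀ x, 0 < u x := fun x => u_pos hp0 hp1 x
  set F : ℝ → ℝ := fun x => x ^ 2 / 8 + p * x - log (u x) with hF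
  set G : ℝ → ℝ := fun x => x / 4 + p - p * exp x / u x with hG
  have hderivu : ∀ x, HasDerivAt u (p * exp x) x := by
    intro x
    exact ((Real.hasDerivAt_exp x).const_mul p).const_add (1 - p)
  have hderivF : ∀ x, HasDerivAt F (G x) x := by
    intro x
    have hlog : HasDerivAt (fun y => log (u y)) (p * exp x / u x) x := by
      exact (hderivu x).log (hupos x).ne'
    have h1 : HasDerivAt (fun y : ℝ => y ^ 2 / 8 + p * y) (x / 4 + p) x := by
      have := ((hasDerivAt_pow 2 x).div_const 8).add ((hasDerivAt_id x).const_mul p)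
      refine this.congr_deriv ?_
      ring
    exact h1.sub hlog
  have hderivG : ∀ x, HasDerivAt G (1 / 4 - p * (1 - p) * exp x / (u x) ^ 2) x := by
    intro x
    have hq : HasDerivAt (fun y => p * exp y / u y)
        ((p * exp x * u x - p * exp x * (p * exp x)) / (u x) ^ 2) x :=
      ((Real.hasDerivAt_exp x).const_mul p).div (hderivu x) (hupos x).ne'
    have h1 : HasDerivAt (fun y : ℝ => y / 4 + p) (1 / 4) x := by
      simpa using ((hasDerivAt_id x).div_const 4).add_const p
    have := h1.sub hq
    refine this.congr_deriv ?_
    have : u x = 1 - p + p * exp x := rfl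
    field_simp
    ring
  have hGmono : Monotone G := by
    have hdiff : Differentiable ℝ G := fun x => (hderivG x).differentiableAt
    refine monotone_of_deriv_nonneg hdiff ?_
    intro x
    rw [(hderivG x).deriv]
    have hux : u x = 1 - p + p * exp x := rfl
    have hx : 4 * (p * (1 - p) * exp x) ≤ (u x) ^ 2 := by
      rw [hux]
      nlinarith [sq_nonneg (1 - p - p * exp x), exp_pos x]
    have := (hupos x)
    rw [sub_nonneg, div_le_iff₀ (by positivity)]
    nlinarith
  have hG0 : G 0 = 0 := by
    simp [hG, hu]
  have hF0 : F 0 = 0 := by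
    simp [hF, hu]
  have hFdiff : Differentiable ℝ F := fun x => (hderivF x).differentiableAt
  have hFnonneg : ∀ x, 0 ≤ F x := by
    intro x
    rcases le_total 0 x with hx | hx
    · have : MonotoneOn F (Set.Ici 0) := by
        refine monotoneOn_of_deriv_nonneg (convex_Ici 0) hFdiff.continuous.continuousOn hFdiff.differentiableOn ?_
        intro y hy
        rw [(hderivF y).deriv, ← hG0]
        exact hGmono (le_of_lt (by simpa using hy))
      have := this (Set.self_mem_Ici) (Set.mem_Ici.2 hx) hx
      linarith [hF0 ▸ this]
    · have : AntitoneOn F (Set.Iic 0) := by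
        refine antitoneOn_of_deriv_nonpos (convex_Iic 0) hFdiff.continuous.continuousOn hFdiff.differentiableOn ?_
        intro y hy
        rw [(hderivF y).deriv, ← hG0]
        exact hGmono (le_of_lt (by simpa using hy))
      have := this (Set.mem_Iic.2 hx) (Set.self_mem_Iic) hx
      linarith [hF0 ▸ this]
  have key : -(p * h) + log (u h) ≤ h ^ 2 / 8 := by
    have := hFnonneg h
    simp only [hF] at this
    linarith
  have hLHS : (1 - p) * exp (-p * h) + p * exp ((1 - p) * h) = exp (-(p * h)) * u h := by
    have e1 : exp ((1 - p) * h) = exp (-(p * h)) * exp h := by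
      rw [← Real.exp_add]; ring_nf
    have e2 : -p * h = -(p * h) := by ring
    rw [e1, e2]
    show _ = _ * (1 - p + p * exp h)
    ring
  rw [hLHS, ← Real.exp_log (hupos h), ← Real.exp_add]
  exact Real.exp_le_exp.2 key


lemma integrable_bdd {α : Type*} [MeasurableSpace α] (μ : Measure α) [IsFiniteMeasure μ]
    {g : α → ℝ} (hg : AEStronglyMeasurable g μ) {C : ℝ} (h : ∀ x, |g x| ≤ C) :
    Integrable g μ :=
  ⟨hg, HasFiniteIntegral.of_bounded (C := C) (ae_of_all _ (by simpa [Real.norm_eq_abs] using h))⟩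

lemma hoeffding_lemma {𝒳 : Type*} [MeasurableSpace 𝒳] (μ : Measure 𝒳) [IsProbabilityMeasure μ]
    {f : 𝒳 → ℝ} (hf : Measurable f) {a b : ℝ} (hab : ∀ x, f x ∈ Set.Icc a b)
    (h0 : ∫ x, f x ∂μ = 0) (l : ℝ) :
    ∫ x, exp (l * f x) ∂μ ≤ exp (l ^ 2 * (b - a) ^ 2 / 8) := by
  have hfb : ∀ x, |f x| ≤ |a| + |b| := fun x => by
    cases abs_cases a <;> cases abs_cases b <;> cases abs_cases (f x) <;>
      nlinarith [(hab x).1, (hab x).2]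
  have hfint : Integrable f μ := integrable_bdd μ hf.aestronglyMeasurable hfb
  have ha0 : a ≤ 0 := by
    have := integral_mono (integrable_const a) hfint (fun x => (hab x).1)
    simpa [h0] using this
  have hb0 : 0 ≤ b := by
    have := integral_mono hfint (integrable_const b) (fun x => (hab x).2)
    simpa [h0] using this
  rcases eq_or_lt_of_le (ha0.trans hb0) with hab' | hab'
  · -- a = b = 0, f ≡ 0
    have hb : b = 0 := le_antisymm (hab' ▸ ha0) hb0
    have ha : a = 0 := by rw [hab', hb]
    have hfx : ∀ x, f x = 0 := fun x =>
      le_antisymm (hb ▸ (hab x).2) (ha ▸ (hab x).1)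
    simp [hfx, ha, hb]
  · -- a < b
    set p : ℝ := -a / (b - a) with hp
    have hba : 0 < b - a := by linarith
    have hp0 : 0 ≤ p := div_nonneg (by linarith) hba.le
    have hp1 : p ≤ 1 := by
      rw [hp, div_le_one hba]; linarith
    set c1 : ℝ := (b * exp (l * a) - a * exp (l * b)) / (b - a) with hc1
    set c2 : ℝ := (exp (l * b) - exp (l * a)) / (b - a) with hc2
    have hpt : ∀ x, exp (l * f x) ≤ c1 + c2 * f x := by
      intro x
      have hθ : 0 ≤ (b - f x) / (b - a) := div_nonneg (by linarith [(hab x).2]) hba.le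
      have hθ' : 0 ≤ (f x - a) / (b - a) := div_nonneg (by linarith [(hab x).1]) hba.le
      have hsum : (b - f x) / (b - a) + (f x - a) / (b - a) = 1 := by
        field_simp
        ring
      have hcx := convexOn_exp.2 (Set.mem_univ (l * a)) (Set.mem_univ (l * b)) hθ hθ' hsum
      simp only [smul_eq_mul] at hcx
      have harg : (b - f x) / (b - a) * (l * a) + (f x - a) / (b - a) * (l * b) = l * f x := by
        field_simp
        ring
      rw [harg] at hcx
      refine hcx.trans (le_of_eq ?_)
      rw [hc1, hc2]
      field_simp
      ring
    have hint2 : Integrable (fun x => c1 + c2 * f x) μ :=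
      (integrable_const c1).add (hfint.const_mul c2)
    have hintexp : Integrable (fun x => exp (l * f x)) μ := by
      refine integrable_bdd μ ((hf.const_mul l).exp.aestronglyMeasurable) (C := exp (|l| * (|a| + |b|))) ?_
      intro x
      rw [abs_of_pos (exp_pos _)]
      apply exp_le_exp.2
      calc l * f x ≤ |l * f x| := le_abs_self _
        _ = |l| * |f x| := abs_mul _ _
        _ ≤ |l| * (|a| + |b|) := mul_le_mul_of_nonneg_left (hfb x) (abs_nonneg l)
    have hInt : ∫ x, exp (l * f x) ∂μ ≤ c1 := by
      calc ∫ x, exp (l * f x) ∂μ ≤ ∫ x, (c1 + c2 * f x) ∂μ := integral_mono hintexp hint2 hpt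
        _ = c1 + c2 * ∫ x, f x ∂μ := by
            rw [integral_add (integrable_const c1) (hfint.const_mul c2), integral_const,
              integral_const_mul]
            simp
        _ = c1 := by rw [h0]; ring
    refine hInt.trans ?_
    -- c1 ≤ exp (l^2 (b-a)^2/8) via hoeffding_core with h := l * (b - a)
    have e1 : l * a = -p * (l * (b - a)) := by
      rw [hp]; field_simp
    have e2 : l * b = (1 - p) * (l * (b - a)) := by
      rw [hp]; field_simp; ring
    have hcore := hoeffding_core hp0 hp1 (l * (b - a))
    have ec1 : c1 = (1 - p) * exp (-p * (l * (b - a))) + p * exp ((1 - p) * (l * (b - a))) := by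
      rw [← e1, ← e2, hc1, hp]
      field_simp
      ring
    have earg : (l * (b - a)) ^ 2 / 8 = l ^ 2 * (b - a) ^ 2 / 8 := by ring
    rw [ec1, ← earg]
    exact hcore

lemma mcdiarmid_mgf {𝒳 : Type*} [MeasurableSpace 𝒳] (P : Measure 𝒳) [IsProbabilityMeasure P]
    (n : ℕ) :
    ∀ (f : (Fin n → 𝒳) → ℝ), Measurable f →
      ∀ (M : ℝ), (∀ ω, |f ω| ≤ M) →
      ∀ (c : ℝ),
      (∀ (i : Fin n) (ω : Fin n → 𝒳) (x x' : 𝒳),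
          f (Function.update ω i x) - f (Function.update ω i x') ≤ c) →
      ∀ (l : ℝ),
        ∫ ω, exp (l * (f ω - ∫ ω', f ω' ∂(Measure.pi fun _ : Fin n => P)))
            ∂(Measure.pi fun _ : Fin n => P) ≤ exp (n * (l ^ 2 * c ^ 2 / 8)) := by
  induction n with
  | zero =>
    intro f hf M hM c hc l
    have hm : ∀ ω : Fin 0 → 𝒳,
        (∫ ω', f ω' ∂(Measure.pi fun _ : Fin 0 => P)) = f ω := by
      intro ω
      have hfc : (fun ω' => f ω') = fun _ : Fin 0 → 𝒳 => f ω :=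
        funext fun ω' => congrArg f (Subsingleton.elim _ _)
      rw [hfc, integral_const]
      simp
    have h1 : ∀ ω : Fin 0 → 𝒳,
        exp (l * (f ω - ∫ ω', f ω' ∂(Measure.pi fun _ : Fin 0 => P))) = 1 := by
      intro ω; rw [hm ω]; simp
    simp only [h1]
    simp
  | succ n ih =>
    intro f hf M hM c hc l
    have hne : Nonempty 𝒳 := by
      by_contra h
      have hem : IsEmpty 𝒳 := not_nonempty_iff.mp h
      have h1 : P Set.univ = 1 := measure_univ
      rw [Set.univ_eq_empty_iff.2 hem, measure_empty] at h1
      exact zero_ne_one h1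
    set Q : Measure (Fin n → 𝒳) := Measure.pi fun _ : Fin n => P with hQ
    set Q' : Measure (Fin (n + 1) → 𝒳) := Measure.pi fun _ : Fin (n + 1) => P with hQ'
    set e := MeasurableEquiv.piFinSuccAbove (fun _ : Fin (n + 1) => 𝒳) 0 with he
    have hmp : MeasurePreserving (⇑e) Q' (P.prod Q) :=
      measurePreserving_piFinSuccAbove (fun _ : Fin (n + 1) => P) 0
    set F : 𝒳 × (Fin n → 𝒳) → ℝ := fun p => f (Fin.cons p.1 p.2) with hFdef
    have hcons_meas : Measurable (fun p : 𝒳 × (Fin n → 𝒳) => (Fin.cons p.1 p.2 : Fin (n+1) → 𝒳)) := by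
      refine measurable_pi_iff.2 fun j => ?_
      refine Fin.cases ?_ (fun k => ?_) j
      · simpa [Fin.cons_zero] using (measurable_fst :
          Measurable fun p : 𝒳 × (Fin n → 𝒳) => p.1)
      · simp only [Fin.cons_succ]
        exact ((measurable_pi_apply k).comp (measurable_snd :
            Measurable fun p : 𝒳 × (Fin n → 𝒳) => p.2))
    have hFmeas : Measurable F := hf.comp hcons_meas
    set m : ℝ := ∫ ω', f ω' ∂Q' with hm
    have hfeF : ∀ ω : Fin (n + 1) → 𝒳, F (e ω) = f ω := by
      intro ω
      have h2 : (Fin.cons (e ω).1 (e ω).2 : Fin (n + 1) → 𝒳) = ω := by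
        funext j
        refine Fin.cases ?_ (fun k => ?_) j
        · simp [he, MeasurableEquiv.piFinSuccAbove]
        · simp [he, MeasurableEquiv.piFinSuccAbove, Fin.zero_succAbove, Fin.tail]
      simpa [hFdef] using congrArg f h2
    -- g
    set g : (Fin n → 𝒳) → ℝ := fun t => ∫ x, F (x, t) ∂P with hgdef
    have hgsm : StronglyMeasurable g := hFmeas.stronglyMeasurable.integral_prod_left'
    have hgmeas : Measurable g := hgsm.measurable
    have hFint1 : ∀ t, Integrable (fun x => F (x, t)) P := fun t =>
      integrable_bdd P ((hFmeas.comp measurable_prodMk_right).aestronglyMeasurable)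
        (fun x => hM _)
    have hgbd : ∀ t, |g t| ≤ M := by
      intro t
      have hnb := norm_integral_le_of_norm_le_const (μ := P) (f := fun x => F (x, t)) (C := M)
        (ae_of_all _ fun x => by simpa [Real.norm_eq_abs] using hM (Fin.cons x t))
      simpa [Real.norm_eq_abs, hgdef] using hnb
    have hmbd : |m| ≤ M := by
      have hnb := norm_integral_le_of_norm_le_const (μ := Q') (f := f) (C := M)
        (ae_of_all _ fun ω => by simpa [Real.norm_eq_abs] using hM ω)
      simpa [Real.norm_eq_abs, hm] using hnb
    have hgdiff : ∀ (i : Fin n) (t : Fin n → 𝒳) (y y' : 𝒳),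
        g (Function.update t i y) - g (Function.update t i y') ≤ c := by
      intro i t y y'
      have h1 : g (Function.update t i y) - g (Function.update t i y') =
          ∫ x, (F (x, Function.update t i y) - F (x, Function.update t i y')) ∂P := by
        rw [integral_sub (hFint1 _) (hFint1 _)]
      rw [h1]
      have h2 : ∀ x : 𝒳, F (x, Function.update t i y) - F (x, Function.update t i y') ≤ c := by
        intro x
        have e1 : (Fin.cons x (Function.update t i y) : Fin (n+1) → 𝒳) =
            Function.update (Fin.cons x t) i.succ y := by rw [Fin.cons_update]
        have e2 : (Fin.cons x (Function.update t i y') : Fin (n+1) → 𝒳) =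
            Function.update (Fin.cons x t) i.succ y' := by rw [Fin.cons_update]
        simpa [hFdef, e1, e2] using hc i.succ (Fin.cons x t) y y'
      calc ∫ x, (F (x, Function.update t i y) - F (x, Function.update t i y')) ∂P
          ≤ ∫ _x, c ∂P := integral_mono ((hFint1 _).sub (hFint1 _)) (integrable_const c) h2
        _ = c := by simp
    have hFintprod : Integrable F (P.prod Q) :=
      integrable_bdd _ hFmeas.aestronglyMeasurable (fun p => hM _)
    have hmgQ : ∫ t, g t ∂Q = m := by
      calc ∫ t, g t ∂Q = ∫ p, F p ∂(P.prod Q) := (integral_prod_symm F hFintprod).symm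
        _ = ∫ ω, F (e ω) ∂Q' := (hmp.integral_comp e.measurableEmbedding F).symm
        _ = ∫ ω, f ω ∂Q' := by congr 1; funext ω; rw [hfeF ω]
        _ = m := hm.symm
    -- Φ
    set Φ : 𝒳 × (Fin n → 𝒳) → ℝ := fun p => exp (l * (F p - m)) with hΦdef
    have hΦmeas : Measurable Φ := (measurable_exp.comp ((hFmeas.sub measurable_const).const_mul l))
    have hΦbd : ∀ p, |Φ p| ≤ exp (|l| * (2 * M)) := by
      intro p
      rw [hΦdef]
      simp only
      rw [abs_of_pos (exp_pos _)]
      apply exp_le_exp.2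
      calc l * (F p - m) ≤ |l * (F p - m)| := le_abs_self _
        _ = |l| * |F p - m| := abs_mul _ _
        _ ≤ |l| * (2 * M) := by
            apply mul_le_mul_of_nonneg_left _ (abs_nonneg l)
            calc |F p - m| ≤ |F p| + |m| := abs_sub _ _
              _ ≤ M + M := add_le_add (hM _) hmbd
              _ = 2 * M := by ring
    have hΦint : Integrable Φ (P.prod Q) :=
      integrable_bdd _ hΦmeas.aestronglyMeasurable hΦbd
    have key : ∫ ω, exp (l * (f ω - m)) ∂Q' = ∫ t, ∫ x, Φ (x, t) ∂P ∂Q := by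
      have h1 : ∫ ω, exp (l * (f ω - m)) ∂Q' = ∫ p, Φ p ∂(P.prod Q) := by
        rw [← hmp.integral_comp e.measurableEmbedding Φ]
        congr 1; funext ω
        rw [hΦdef]; simp only [hfeF ω]
      rw [h1, integral_prod_symm Φ hΦint]
    -- inner bound
    have inner_le : ∀ t, ∫ x, Φ (x, t) ∂P ≤ exp (l ^ 2 * c ^ 2 / 8) * exp (l * (g t - m)) := by
      intro t
      set h : 𝒳 → ℝ := fun x => F (x, t) - g t with hhdef
      have hhmeas : Measurable h := (hFmeas.comp measurable_prodMk_right).sub measurable_const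
      have hh0 : ∫ x, h x ∂P = 0 := by
        rw [hhdef]
        simp only
        rw [integral_sub (hFint1 t) (integrable_const _), integral_const]
        simp [hgdef]
      have hhdiff : ∀ x x', h x - h x' ≤ c := by
        intro x x'
        have e1 : (Fin.cons x t : Fin (n+1) → 𝒳) = Function.update (Fin.cons x' t) 0 x :=
          (Fin.update_cons_zero _ _ _).symm
        have e2 : (Fin.cons x' t : Fin (n+1) → 𝒳) = Function.update (Fin.cons x' t) 0 x' := by
          rw [Fin.update_cons_zero]
        have := hc 0 (Fin.cons x' t) x x'
        rw [← e1, ← e2] at this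
        simpa [hhdef, hFdef] using this
      obtain ⟨x₀⟩ := hne
      have hbdd : BddBelow (Set.range h) := by
        refine ⟨h x₀ - c, ?_⟩
        rintro y ⟨x, rfl⟩
        have := hhdiff x₀ x
        linarith
      set a : ℝ := sInf (Set.range h) with ha
      have hIcc : ∀ x, h x ∈ Set.Icc a (a + c) := by
        intro x
        constructor
        · exact csInf_le hbdd ⟨x, rfl⟩
        · have : h x - c ≤ a := by
            refine le_csInf ⟨h x₀, ⟨x₀, rfl⟩⟩ ?_
            rintro y ⟨x', rfl⟩
            have := hhdiff x x'
            linarith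
          linarith
      have hhoeff := hoeffding_lemma P hhmeas hIcc hh0 l
      have hsplit : ∀ x, Φ (x, t) = exp (l * h x) * exp (l * (g t - m)) := by
        intro x
        rw [hΦdef, hhdef]
        simp only
        rw [← Real.exp_add]
        ring_nf
      calc ∫ x, Φ (x, t) ∂P = (∫ x, exp (l * h x) ∂P) * exp (l * (g t - m)) := by
            simp only [hsplit]
            rw [integral_mul_const]
        _ ≤ exp (l ^ 2 * c ^ 2 / 8) * exp (l * (g t - m)) := by
            apply mul_le_mul_of_nonneg_right _ (exp_pos _).le
            simpa using hhoeff
    -- outer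
    have hint1 : Integrable (fun t => ∫ x, Φ (x, t) ∂P) Q := by
      refine integrable_bdd Q (hΦmeas.stronglyMeasurable.integral_prod_left').aestronglyMeasurable
        (C := exp (|l| * (2 * M))) ?_
      intro t
      have hnb := norm_integral_le_of_norm_le_const (μ := P) (f := fun x => Φ (x, t))
        (C := exp (|l| * (2 * M))) (ae_of_all _ fun x => by
          simpa [Real.norm_eq_abs] using hΦbd (x, t))
      simpa [Real.norm_eq_abs] using hnb
    have hgexpbd : ∀ t, |exp (l * (g t - m))| ≤ exp (|l| * (2 * M)) := by
      intro t
      rw [abs_of_pos (exp_pos _)]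
      apply exp_le_exp.2
      calc l * (g t - m) ≤ |l * (g t - m)| := le_abs_self _
        _ = |l| * |g t - m| := abs_mul _ _
        _ ≤ |l| * (2 * M) := by
            apply mul_le_mul_of_nonneg_left _ (abs_nonneg l)
            calc |g t - m| ≤ |g t| + |m| := abs_sub _ _
              _ ≤ M + M := add_le_add (hgbd _) hmbd
              _ = 2 * M := by ring
    have hint2' : Integrable (fun t => exp (l * (g t - m))) Q :=
      integrable_bdd Q (measurable_exp.comp ((hgmeas.sub measurable_const).const_mul l)).aestronglyMeasurable
        hgexpbd
    have hint2 : Integrable (fun t => exp (l ^ 2 * c ^ 2 / 8) * exp (l * (g t - m))) Q :=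
      hint2'.const_mul _
    have hIH := ih g hgmeas M hgbd c hgdiff l
    rw [hmgQ] at hIH
    calc ∫ ω, exp (l * (f ω - m)) ∂Q' = ∫ t, ∫ x, Φ (x, t) ∂P ∂Q := key
      _ ≤ ∫ t, exp (l ^ 2 * c ^ 2 / 8) * exp (l * (g t - m)) ∂Q :=
          integral_mono hint1 hint2 inner_le
      _ = exp (l ^ 2 * c ^ 2 / 8) * ∫ t, exp (l * (g t - m)) ∂Q := by
          rw [integral_const_mul]
      _ ≤ exp (l ^ 2 * c ^ 2 / 8) * exp (n * (l ^ 2 * c ^ 2 / 8)) :=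
          mul_le_mul_of_nonneg_left hIH (exp_pos _).le
      _ = exp ((n + 1 : ℕ) * (l ^ 2 * c ^ 2 / 8)) := by
          rw [← Real.exp_add]
          push_cast
          ring_nf

open scoped RealInnerProductSpace

lemma integrable_bdd' {α E : Type*} [MeasurableSpace α] [NormedAddCommGroup E]
    (μ : Measure α) [IsFiniteMeasure μ] {g : α → E} (hg : AEStronglyMeasurable g μ)
    {C : ℝ} (h : ∀ x, ‖g x‖ ≤ C) : Integrable g μ :=
  ⟨hg, HasFiniteIntegral.of_bounded (C := C) (ae_of_all _ h)⟩

lemma sum_sq_integral {𝒳 : Type*} [MeasurableSpace 𝒳] {H : Type*} [NormedAddCommGroup H]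
    [InnerProductSpace ℝ H] [CompleteSpace H]
    (P : Measure 𝒳) [IsProbabilityMeasure P]
    (ψ : 𝒳 → H) (hψ : StronglyMeasurable ψ) {C : ℝ} (hC : ∀ x, ‖ψ x‖ ≤ C)
    (h0 : ∫ x, ψ x ∂P = 0) :
    ∀ n : ℕ, ∫ ω, ‖∑ i : Fin n, ψ (ω i)‖ ^ 2 ∂(Measure.pi fun _ : Fin n => P)
      = n * ∫ x, ‖ψ x‖ ^ 2 ∂P := by
  intro n
  induction n with
  | zero => simp
  | succ n ih =>
    have hne : Nonempty 𝒳 := by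
      by_contra h
      have hem : IsEmpty 𝒳 := not_nonempty_iff.mp h
      have h1 : P Set.univ = 1 := measure_univ
      rw [Set.univ_eq_empty_iff.2 hem, measure_empty] at h1
      exact zero_ne_one h1
    obtain ⟨x₀⟩ := hne
    have hC0 : 0 ≤ C := le_trans (norm_nonneg _) (hC x₀)
    set Q : Measure (Fin n → 𝒳) := Measure.pi fun _ : Fin n => P with hQ
    set Q' : Measure (Fin (n + 1) → 𝒳) := Measure.pi fun _ : Fin (n + 1) => P with hQ'
    set e := MeasurableEquiv.piFinSuccAbove (fun _ : Fin (n + 1) => 𝒳) 0 with he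
    have hmp : MeasurePreserving (⇑e) Q' (P.prod Q) :=
      measurePreserving_piFinSuccAbove (fun _ : Fin (n + 1) => P) 0
    set S : (Fin n → 𝒳) → H := fun t => ∑ i : Fin n, ψ (t i) with hSdef
    have hSsm : StronglyMeasurable S := by
      have hSeq : S = ∑ i ∈ Finset.univ, (fun t : Fin n → 𝒳 => ψ (t i)) := by
        funext t; simp [hSdef]
      rw [hSeq]
      exact Finset.stronglyMeasurable_sum _ fun i _ =>
        hψ.comp_measurable (measurable_pi_apply i)
    have hSbd : ∀ t, ‖S t‖ ≤ n * C := by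
      intro t
      calc ‖S t‖ ≤ ∑ i : Fin n, ‖ψ (t i)‖ := norm_sum_le _ _
        _ ≤ ∑ _i : Fin n, C := Finset.sum_le_sum fun i _ => hC _
        _ = n * C := by simp [mul_comm]
    have hψint : Integrable ψ P := integrable_bdd' P hψ.aestronglyMeasurable hC
    set G : 𝒳 × (Fin n → 𝒳) → ℝ := fun p => ‖ψ p.1 + S p.2‖ ^ 2 with hGdef
    have heG : ∀ ω : Fin (n + 1) → 𝒳, G (e ω) = ‖∑ i : Fin (n + 1), ψ (ω i)‖ ^ 2 := by
      intro ω
      have h1 : ∑ i : Fin (n + 1), ψ (ω i) = ψ (ω 0) + ∑ i : Fin n, ψ (ω i.succ) :=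
        Fin.sum_univ_succ _
      have h2 : G (e ω) = ‖ψ (ω 0) + ∑ i : Fin n, ψ (ω i.succ)‖ ^ 2 := by
        simp [hGdef, he, MeasurableEquiv.piFinSuccAbove, hSdef, Fin.zero_succAbove, Fin.tail]
      rw [h2, h1]
    -- integrabilities of pieces
    have hA_sm : StronglyMeasurable fun p : 𝒳 × (Fin n → 𝒳) => ‖ψ p.1‖ ^ 2 := by
      have := (hψ.comp_measurable (measurable_fst : Measurable fun p : 𝒳 × (Fin n → 𝒳) => p.1)).norm
      rw [show (fun p : 𝒳 × (Fin n → 𝒳) => ‖ψ p.1‖ ^ 2) = fun p => ‖ψ p.1‖ * ‖ψ p.1‖ from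
        funext fun p => pow_two _]
      exact this.mul this
    have hC_sm : StronglyMeasurable fun p : 𝒳 × (Fin n → 𝒳) => ‖S p.2‖ ^ 2 := by
      have := (hSsm.comp_measurable (measurable_snd : Measurable fun p : 𝒳 × (Fin n → 𝒳) => p.2)).norm
      rw [show (fun p : 𝒳 × (Fin n → 𝒳) => ‖S p.2‖ ^ 2) = fun p => ‖S p.2‖ * ‖S p.2‖ from
        funext fun p => pow_two _]
      exact this.mul this
    have hB_sm : StronglyMeasurable fun p : 𝒳 × (Fin n → 𝒳) => ⟪ψ p.1, S p.2⟫ :=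
      (hψ.comp_measurable measurable_fst).inner (hSsm.comp_measurable measurable_snd)
    have hintA : Integrable (fun p : 𝒳 × (Fin n → 𝒳) => ‖ψ p.1‖ ^ 2) (P.prod Q) := by
      refine integrable_bdd (P.prod Q) hA_sm.aestronglyMeasurable (C := C ^ 2) fun p => ?_
      rw [abs_of_nonneg (by positivity)]
      exact pow_le_pow_left₀ (norm_nonneg _) (hC _) 2
    have hintC : Integrable (fun p : 𝒳 × (Fin n → 𝒳) => ‖S p.2‖ ^ 2) (P.prod Q) := by
      refine integrable_bdd (P.prod Q) hC_sm.aestronglyMeasurable (C := (n * C) ^ 2) fun p => ?_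
      rw [abs_of_nonneg (by positivity)]
      exact pow_le_pow_left₀ (norm_nonneg _) (hSbd _) 2
    have hintB : Integrable (fun p : 𝒳 × (Fin n → 𝒳) => ⟪ψ p.1, S p.2⟫) (P.prod Q) := by
      refine integrable_bdd (P.prod Q) hB_sm.aestronglyMeasurable (C := C * (n * C)) fun p => ?_
      calc |⟪ψ p.1, S p.2⟫| ≤ ‖ψ p.1‖ * ‖S p.2‖ := abs_real_inner_le_norm _ _
        _ ≤ C * (n * C) := mul_le_mul (hC _) (hSbd _) (norm_nonneg _) hC0
    have hGsplit : ∀ p : 𝒳 × (Fin n → 𝒳),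
        G p = ‖ψ p.1‖ ^ 2 + 2 * ⟪ψ p.1, S p.2⟫ + ‖S p.2‖ ^ 2 := fun p =>
      norm_add_sq_real _ _
    have hEA : ∫ p, ‖ψ p.1‖ ^ 2 ∂(P.prod Q) = ∫ x, ‖ψ x‖ ^ 2 ∂P := by
      rw [integral_prod _ hintA]
      simp
    have hEC : ∫ p, ‖S p.2‖ ^ 2 ∂(P.prod Q) = ∫ t, ‖S t‖ ^ 2 ∂Q := by
      rw [integral_prod_symm _ hintC]
      simp
    have hEB : ∫ p, ⟪ψ p.1, S p.2⟫ ∂(P.prod Q) = 0 := by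
      rw [integral_prod_symm _ hintB]
      have hz : ∀ t, ∫ x, ⟪ψ x, S t⟫ ∂P = 0 := by
        intro t
        have h1 : ∀ x, ⟪ψ x, S t⟫ = ⟪S t, ψ x⟫ := fun x => real_inner_comm _ _
        simp only [h1]
        rw [integral_inner hψint (S t), h0, inner_zero_right]
      simp only [hz]
      simp
    calc ∫ ω, ‖∑ i : Fin (n + 1), ψ (ω i)‖ ^ 2 ∂Q'
        = ∫ ω, G (e ω) ∂Q' := by congr 1; funext ω; rw [heG ω]
      _ = ∫ p, G p ∂(P.prod Q) := hmp.integral_comp e.measurableEmbedding G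
      _ = ∫ x, ‖ψ x‖ ^ 2 ∂P + 2 * 0 + ↑n * ∫ x, ‖ψ x‖ ^ 2 ∂P := by
          have hintB2 : Integrable (fun p : 𝒳 × (Fin n → 𝒳) => 2 * ⟪ψ p.1, S p.2⟫) (P.prod Q) :=
            hintB.const_mul 2
          have hsum1 : Integrable
              (fun p : 𝒳 × (Fin n → 𝒳) => ‖ψ p.1‖ ^ 2 + 2 * ⟪ψ p.1, S p.2⟫) (P.prod Q) :=
            hintA.add hintB2
          simp only [hGsplit]
          rw [integral_add hsum1 hintC, integral_add hintA hintB2, integral_const_mul,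
            hEA, hEB, hEC, ih]
      _ = (↑(n + 1) : ℝ) * ∫ x, ‖ψ x‖ ^ 2 ∂P := by push_cast; ring

set_option maxHeartbeats 1000000 in
/-- **High-probability bound for the empirical mean embedding:** if `k(x,x) ≤ 1`
for all `x`, then for every `n ≥ 1` and `δ ∈ (0,1)`, with probability at least
`1 − δ` over an i.i.d. sample `X₁, …, Xₙ ∼ P`,
`‖μ̂_P − μ_P‖ ≤ 2 √(∫ k(x,x) dP(x) / n) + √(2 log(1/δ) / n)`. -/
theorem empirical_mean_embedding_concentration
    {𝒳 : Type*} [MeasurableSpace 𝒳]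
    {H : Type*} [NormedAddCommGroup H] [InnerProductSpace ℝ H] [CompleteSpace H]
    (φ : 𝒳 → H) (hφ : StronglyMeasurable φ)
    (P : Measure 𝒳) [IsProbabilityMeasure P]
    (hb : ∀ x, ⟪φ x, φ x⟫ ≤ 1)
    (n : ℕ) (hn : 1 ≤ n) (δ : ℝ) (hδ0 : 0 < δ) (hδ1 : δ < 1) :
    ENNReal.ofReal (1 - δ) ≤
      (Measure.pi fun _ : Fin n => P)
        {ω | ‖((n : ℝ)⁻¹ • ∑ i : Fin n, φ (ω i)) - ∫ x, φ x ∂P‖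
              ≤ 2 * Real.sqrt ((∫ x, ⟪φ x, φ x⟫ ∂P) / n)
                + Real.sqrt (2 * Real.log (1 / δ) / n)} := by
  classical
  have hnpos : (0 : ℝ) < n := by exact_mod_cast hn
  have hn0 : (n : ℝ) ≠ 0 := ne_of_gt hnpos
  set μH : H := ∫ x, φ x ∂P with hμH
  have hφnorm : ∀ x, ‖φ x‖ ≤ 1 := by
    intro x
    have h2 : ‖φ x‖ ^ 2 ≤ 1 := by rw [← real_inner_self_eq_norm_sq]; exact hb x
    nlinarith [norm_nonneg (φ x)]
  have hφint : Integrable φ P := integrable_bdd' P hφ.aestronglyMeasurable hφnorm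
  have hμnorm : ‖μH‖ ≤ 1 := by
    have := norm_integral_le_of_norm_le_const (μ := P) (f := φ) (C := 1)
      (ae_of_all _ hφnorm)
    simpa [hμH] using this
  set ψ : 𝒳 → H := fun x => φ x - μH with hψdef
  have hψsm : StronglyMeasurable ψ := hφ.sub stronglyMeasurable_const
  have hψnorm : ∀ x, ‖ψ x‖ ≤ 2 := fun x =>
    le_trans (norm_sub_le _ _) (by linarith [hφnorm x, hμnorm])
  have hψ0 : ∫ x, ψ x ∂P = 0 := by
    rw [hψdef]
    rw [integral_sub hφint (integrable_const μH), integral_const]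
    simp [hμH]
  set Qn : Measure (Fin n → 𝒳) := Measure.pi fun _ : Fin n => P with hQn
  set f : (Fin n → 𝒳) → ℝ :=
    fun ω => ‖((n : ℝ)⁻¹ • ∑ i : Fin n, φ (ω i)) - μH‖ with hfdef
  -- measurability of f
  have hsum_sm : StronglyMeasurable fun ω : Fin n → 𝒳 => ∑ i : Fin n, φ (ω i) := by
    have hseq : (fun ω : Fin n → 𝒳 => ∑ i : Fin n, φ (ω i)) =
        ∑ i ∈ Finset.univ, (fun ω : Fin n → 𝒳 => φ (ω i)) := by
      funext ω; simp
    rw [hseq]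
    exact Finset.stronglyMeasurable_sum _ fun i _ =>
      hφ.comp_measurable (measurable_pi_apply i)
  have hfsm : StronglyMeasurable f :=
    ((hsum_sm.const_smul ((n : ℝ)⁻¹)).sub stronglyMeasurable_const).norm
  have hfmeas : Measurable f := hfsm.measurable
  -- f in terms of ψ
  have hfψ : ∀ ω : Fin n → 𝒳, ((n : ℝ)⁻¹ • ∑ i : Fin n, φ (ω i)) - μH
      = (n : ℝ)⁻¹ • ∑ i : Fin n, ψ (ω i) := by
    intro ω
    have h1 : ∑ i : Fin n, ψ (ω i)
        = (∑ i : Fin n, φ (ω i)) - (n : ℕ) • μH := by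
      rw [hψdef]
      rw [Finset.sum_sub_distrib, Finset.sum_const, Finset.card_univ, Fintype.card_fin]
    rw [h1, smul_sub, ← Nat.cast_smul_eq_nsmul ℝ, smul_smul, inv_mul_cancel₀ hn0, one_smul]
  -- boundedness of f
  have hfbd : ∀ ω, |f ω| ≤ 2 := by
    intro ω
    rw [hfdef]
    simp only
    rw [abs_of_nonneg (norm_nonneg _)]
    calc ‖((n : ℝ)⁻¹ • ∑ i : Fin n, φ (ω i)) - μH‖
        ≤ ‖(n : ℝ)⁻¹ • ∑ i : Fin n, φ (ω i)‖ + ‖μH‖ := norm_sub_le _ _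
      _ ≤ 1 + 1 := by
          apply add_le_add _ hμnorm
          rw [norm_smul, Real.norm_eq_abs, abs_of_nonneg (by positivity : (0:ℝ) ≤ (n:ℝ)⁻¹)]
          calc (n : ℝ)⁻¹ * ‖∑ i : Fin n, φ (ω i)‖
              ≤ (n : ℝ)⁻¹ * (n * 1) := by
                apply mul_le_mul_of_nonneg_left _ (by positivity)
                calc ‖∑ i : Fin n, φ (ω i)‖ ≤ ∑ i : Fin n, ‖φ (ω i)‖ := norm_sum_le _ _
                  _ ≤ ∑ _i : Fin n, (1:ℝ) := Finset.sum_le_sum fun i _ => hφnorm _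
                  _ = n * 1 := by simp [mul_comm]
            _ = 1 := by field_simp
      _ = 2 := by norm_num
  -- bounded differences
  have hfdiff : ∀ (i : Fin n) (ω : Fin n → 𝒳) (x x' : 𝒳),
      f (Function.update ω i x) - f (Function.update ω i x') ≤ 2 / n := by
    intro i ω x x'
    have hsum : ∀ y : 𝒳, ∑ j : Fin n, φ (Function.update ω i y j)
        = φ y + ∑ j ∈ Finset.univ \ {i}, φ (ω j) := by
      intro y
      have hupd : (fun j => φ (Function.update ω i y j))
          = Function.update (fun j => φ (ω j)) i (φ y) := by
        funext j
        by_cases hji : j = i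
        · subst hji; simp
        · simp [Function.update_of_ne hji]
      calc ∑ j : Fin n, φ (Function.update ω i y j)
          = ∑ j : Fin n, Function.update (fun j => φ (ω j)) i (φ y) j := by rw [hupd]
        _ = φ y + ∑ j ∈ Finset.univ \ {i}, φ (ω j) := by
            rw [Finset.sum_update_of_mem (Finset.mem_univ i)]
    have hvec : (((n : ℝ)⁻¹ • ∑ j : Fin n, φ (Function.update ω i x j)) - μH)
        - (((n : ℝ)⁻¹ • ∑ j : Fin n, φ (Function.update ω i x' j)) - μH)
        = (n : ℝ)⁻¹ • (φ x - φ x') := by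
      rw [hsum x, hsum x', smul_add, smul_add, smul_sub]
      abel
    calc f (Function.update ω i x) - f (Function.update ω i x')
        ≤ ‖(((n : ℝ)⁻¹ • ∑ j : Fin n, φ (Function.update ω i x j)) - μH)
            - (((n : ℝ)⁻¹ • ∑ j : Fin n, φ (Function.update ω i x' j)) - μH)‖ :=
          norm_sub_norm_le _ _
      _ = (n : ℝ)⁻¹ * ‖φ x - φ x'‖ := by
          rw [hvec, norm_smul, Real.norm_eq_abs,
            abs_of_nonneg (by positivity : (0:ℝ) ≤ (n:ℝ)⁻¹)]
      _ ≤ (n : ℝ)⁻¹ * 2 := by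
          apply mul_le_mul_of_nonneg_left _ (by positivity)
          calc ‖φ x - φ x'‖ ≤ ‖φ x‖ + ‖φ x'‖ := norm_sub_le _ _
            _ ≤ 2 := by linarith [hφnorm x, hφnorm x']
      _ = 2 / n := by ring
  set m : ℝ := ∫ ω, f ω ∂Qn with hm
  have hfint : Integrable f Qn := integrable_bdd Qn hfsm.aestronglyMeasurable hfbd
  have hm0 : 0 ≤ m := integral_nonneg fun ω => norm_nonneg _
  -- second moment
  set kbar : ℝ := ∫ x, ⟪φ x, φ x⟫ ∂P with hkbar
  have hk0 : 0 ≤ kbar := integral_nonneg fun x => real_inner_self_nonneg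
  have hψ2int : Integrable (fun x => ‖ψ x‖ ^ 2) P := by
    refine integrable_bdd P ((hψsm.norm.mul hψsm.norm).aestronglyMeasurable.congr
      (ae_of_all _ fun x => (pow_two _).symm)) (C := 4) fun x => ?_
    rw [abs_of_nonneg (by positivity)]
    calc ‖ψ x‖ ^ 2 ≤ 2 ^ 2 := pow_le_pow_left₀ (norm_nonneg _) (hψnorm x) 2
      _ = 4 := by norm_num
  have hψ2k : ∫ x, ‖ψ x‖ ^ 2 ∂P ≤ kbar := by
    have hexp : ∀ x, ‖ψ x‖ ^ 2 = ‖φ x‖ ^ 2 - 2 * ⟪φ x, μH⟫ + ‖μH‖ ^ 2 := fun x =>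
      norm_sub_sq_real _ _
    have hφ2int : Integrable (fun x => ‖φ x‖ ^ 2) P := by
      refine integrable_bdd P ?_ (C := 1) fun x => ?_
      · have := hφ.norm
        exact (this.mul this).aestronglyMeasurable.congr (ae_of_all _ fun x => (pow_two _).symm)
      · rw [abs_of_nonneg (by positivity)]
        calc ‖φ x‖ ^ 2 ≤ 1 ^ 2 := pow_le_pow_left₀ (norm_nonneg _) (hφnorm x) 2
          _ = 1 := one_pow 2
    have hinner_int : Integrable (fun x => ⟪φ x, μH⟫) P := hφint.inner_const μH
    have hinner : ∫ x, ⟪φ x, μH⟫ ∂P = ‖μH‖ ^ 2 := by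
      have h1 : ∀ x, ⟪φ x, μH⟫ = ⟪μH, φ x⟫ := fun x => real_inner_comm _ _
      simp only [h1]
      rw [integral_inner hφint μH, ← hμH, real_inner_self_eq_norm_sq]
    have hφ2 : ∫ x, ‖φ x‖ ^ 2 ∂P = kbar := by
      rw [hkbar]
      congr 1
      funext x
      rw [real_inner_self_eq_norm_sq]
    calc ∫ x, ‖ψ x‖ ^ 2 ∂P
        = ∫ x, (‖φ x‖ ^ 2 - 2 * ⟪φ x, μH⟫ + ‖μH‖ ^ 2) ∂P := by
          congr 1; funext x; rw [hexp x]
      _ = (∫ x, ‖φ x‖ ^ 2 ∂P) - 2 * (∫ x, ⟪φ x, μH⟫ ∂P) + ‖μH‖ ^ 2 := by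
          have hi1 : Integrable (fun x => 2 * ⟪φ x, μH⟫) P := hinner_int.const_mul 2
          have hi2 : Integrable (fun x => ‖φ x‖ ^ 2 - 2 * ⟪φ x, μH⟫) P := hφ2int.sub hi1
          rw [integral_add hi2 (integrable_const _), integral_sub hφ2int hi1,
            integral_const_mul, integral_const]
          simp
      _ = kbar - ‖μH‖ ^ 2 := by rw [hinner, hφ2]; ring
      _ ≤ kbar := by nlinarith [sq_nonneg ‖μH‖]
  have hf2 : ∫ ω, f ω ^ 2 ∂Qn = (∫ x, ‖ψ x‖ ^ 2 ∂P) / n := by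
    have hsq := sum_sq_integral P ψ hψsm hψnorm hψ0 n
    have hfval : ∀ ω, f ω ^ 2 = ((n:ℝ)⁻¹) ^ 2 * ‖∑ i : Fin n, ψ (ω i)‖ ^ 2 := by
      intro ω
      rw [hfdef]
      simp only
      rw [hfψ ω, norm_smul, Real.norm_eq_abs, abs_of_nonneg (by positivity : (0:ℝ) ≤ (n:ℝ)⁻¹),
        mul_pow]
    calc ∫ ω, f ω ^ 2 ∂Qn
        = ∫ ω, ((n:ℝ)⁻¹) ^ 2 * ‖∑ i : Fin n, ψ (ω i)‖ ^ 2 ∂Qn := by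
          congr 1; funext ω; rw [hfval ω]
      _ = ((n:ℝ)⁻¹) ^ 2 * ∫ ω, ‖∑ i : Fin n, ψ (ω i)‖ ^ 2 ∂Qn := integral_const_mul _ _
      _ = ((n:ℝ)⁻¹) ^ 2 * ((n:ℝ) * ∫ x, ‖ψ x‖ ^ 2 ∂P) := by rw [hsq]
      _ = (∫ x, ‖ψ x‖ ^ 2 ∂P) / n := by field_simp
  have hf2int : Integrable (fun ω => f ω ^ 2) Qn := by
    refine integrable_bdd Qn ((hfsm.mul hfsm).aestronglyMeasurable.congr
      (ae_of_all _ fun ω => (pow_two _).symm)) (C := 4) fun ω => ?_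
    rw [abs_of_nonneg (by positivity)]
    calc f ω ^ 2 ≤ 2 ^ 2 := by
          have h := abs_le.mp (hfbd ω)
          nlinarith [h.1, h.2]
      _ = 4 := by norm_num
  have hmsq : m ^ 2 ≤ ∫ ω, f ω ^ 2 ∂Qn := by
    have hvar : ∫ ω, (f ω - m) ^ 2 ∂Qn = (∫ ω, f ω ^ 2 ∂Qn) - m ^ 2 := by
      have hexp : ∀ ω, (f ω - m) ^ 2 = f ω ^ 2 - 2 * m * f ω + m ^ 2 := fun ω => by ring
      have hint1 : Integrable (fun ω => 2 * m * f ω) Qn := hfint.const_mul _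
      calc ∫ ω, (f ω - m) ^ 2 ∂Qn
          = ∫ ω, (f ω ^ 2 - 2 * m * f ω + m ^ 2) ∂Qn := by
            congr 1; funext ω; rw [hexp ω]
        _ = (∫ ω, f ω ^ 2 ∂Qn) - 2 * m * (∫ ω, f ω ∂Qn) + m ^ 2 := by
            have hi2 : Integrable (fun ω => f ω ^ 2 - 2 * m * f ω) Qn := hf2int.sub hint1
            rw [integral_add hi2 (integrable_const _), integral_sub hf2int hint1,
              integral_const_mul, integral_const]
            simp
        _ = (∫ ω, f ω ^ 2 ∂Qn) - m ^ 2 := by rw [← hm]; ring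
    have h0le : 0 ≤ ∫ ω, (f ω - m) ^ 2 ∂Qn := integral_nonneg fun ω => sq_nonneg _
    rw [hvar] at h0le
    linarith
  have hmle : m ≤ Real.sqrt (kbar / n) := by
    have h1 : m ^ 2 ≤ kbar / n := by
      refine hmsq.trans ?_
      rw [hf2]
      gcongr
    calc m = Real.sqrt (m ^ 2) := (Real.sqrt_sq hm0).symm
      _ ≤ Real.sqrt (kbar / n) := Real.sqrt_le_sqrt h1
  -- Chernoff step
  set t : ℝ := Real.sqrt (2 * Real.log (1 / δ) / n) with htdef
  have hlogpos : 0 < Real.log (1 / δ) := by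
    apply Real.log_pos
    rw [lt_div_iff₀ hδ0]
    linarith
  have ht0 : 0 ≤ t := Real.sqrt_nonneg _
  have ht2 : t ^ 2 = 2 * Real.log (1 / δ) / n := Real.sq_sqrt (by positivity)
  have hmgf := mcdiarmid_mgf P n f hfmeas 2 hfbd (2 / n) hfdiff ((n : ℝ) * t)
  have hXm : Measurable fun ω => f ω - m := hfmeas.sub measurable_const
  have hXexp_int : Integrable (fun ω => exp ((n : ℝ) * t * (f ω - m))) Qn := by
    refine integrable_bdd Qn
      (measurable_exp.comp ((hXm.const_mul _))).aestronglyMeasurable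
      (C := exp ((n : ℝ) * t * 4)) fun ω => ?_
    rw [abs_of_pos (exp_pos _)]
    apply exp_le_exp.2
    have h1 : f ω - m ≤ 4 := by
      have h2 := hfbd ω
      have h3 : |m| ≤ 2 := by
        have := norm_integral_le_of_norm_le_const (μ := Qn) (f := f) (C := 2)
          (ae_of_all _ fun ω => by simpa [Real.norm_eq_abs] using hfbd ω)
        simpa [Real.norm_eq_abs, hm] using this
      cases abs_cases (f ω) <;> cases abs_cases m <;> linarith
    have hnt : 0 ≤ (n : ℝ) * t := by positivity
    nlinarith
  have hchern := ProbabilityTheory.measure_ge_le_exp_mul_mgf (μ := Qn)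
    (X := fun ω => f ω - m) t (by positivity : (0:ℝ) ≤ (n : ℝ) * t) hXexp_int
  have hmgf_eq : ProbabilityTheory.mgf (fun ω => f ω - m) Qn ((n : ℝ) * t)
      = ∫ ω, exp ((n : ℝ) * t * (f ω - m)) ∂Qn := rfl
  have hbound : exp (-((n : ℝ) * t) * t) * ∫ ω, exp ((n : ℝ) * t * (f ω - m)) ∂Qn ≤ δ := by
    have h1 : ∫ ω, exp ((n : ℝ) * t * (f ω - m)) ∂Qn
        ≤ exp ((n : ℝ) * (((n : ℝ) * t) ^ 2 * (2 / n) ^ 2 / 8)) := hmgf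
    have h2 : (n : ℝ) * (((n : ℝ) * t) ^ 2 * (2 / n) ^ 2 / 8) = (n : ℝ) * t ^ 2 / 2 := by
      field_simp
      ring
    calc exp (-((n : ℝ) * t) * t) * ∫ ω, exp ((n : ℝ) * t * (f ω - m)) ∂Qn
        ≤ exp (-((n : ℝ) * t) * t) * exp ((n : ℝ) * t ^ 2 / 2) := by
          apply mul_le_mul_of_nonneg_left _ (exp_pos _).le
          rw [← h2]; exact h1
      _ = exp (-((n : ℝ) * t ^ 2 / 2)) := by
          rw [← Real.exp_add]; congr 1; ring
      _ = δ := by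
          have h3 : (n : ℝ) * t ^ 2 / 2 = Real.log (1 / δ) := by
            rw [ht2]; field_simp
          rw [h3, Real.log_div one_ne_zero (ne_of_gt hδ0), Real.log_one]
          simp [Real.exp_log hδ0]
  have htail : Qn {ω | t ≤ f ω - m} ≤ ENNReal.ofReal δ := by
    rw [ENNReal.le_ofReal_iff_toReal_le (measure_ne_top _ _) hδ0.le]
    calc (Qn {ω | t ≤ f ω - m}).toReal
        ≤ exp (-((n : ℝ) * t) * t) *
            ProbabilityTheory.mgf (fun ω => f ω - m) Qn ((n : ℝ) * t) := hchern
      _ ≤ δ := by rw [hmgf_eq]; exact hbound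
  -- event inclusion and conclusion
  set B : ℝ := 2 * Real.sqrt (kbar / n) + t with hB
  have hmtB : m + t ≤ B := by
    rw [hB]
    have := Real.sqrt_nonneg (kbar / n)
    linarith
  have hsub : {ω : Fin n → 𝒳 | t ≤ f ω - m}ᶜ ⊆ {ω : Fin n → 𝒳 | f ω ≤ B} := by
    intro ω hω
    simp only [Set.mem_compl_iff, Set.mem_setOf_eq, not_le] at hω
    simp only [Set.mem_setOf_eq]
    linarith
  have hmeasE : MeasurableSet {ω : Fin n → 𝒳 | t ≤ f ω - m} :=
    measurableSet_le measurable_const hXm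
  have hgoal : ENNReal.ofReal (1 - δ) ≤ Qn {ω : Fin n → 𝒳 | f ω ≤ B} := by
    calc ENNReal.ofReal (1 - δ) = 1 - ENNReal.ofReal δ := by
          rw [ENNReal.ofReal_sub _ hδ0.le]; simp
      _ ≤ 1 - Qn {ω | t ≤ f ω - m} := tsub_le_tsub_left htail 1
      _ = Qn {ω | t ≤ f ω - m}ᶜ := by
          rw [measure_compl hmeasE (measure_ne_top _ _), measure_univ]
      _ ≤ Qn {ω : Fin n → 𝒳 | f ω ≤ B} := measure_mono hsub
  exact hgoal
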